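/- Let a, b, c ∈ Aut(X*) be defined by the wreath recursion a = σ(b,a), b = σ(c,b), c = (c,a). Then the group G = ⟨a,b,c⟩ is torsion free: every nontrivial element of G has infinite order. -/

import Mathlib

/-- `WRec s f f₀ f₁` says that the tree automorphism `f` of the binary rooted tree
`X* = List Bool` is given by the wreath recursion `f = σˢ(f₀, f₁)`:
the root permutation of `f` is the transposition `σ` when `s = true` and is trivial when
`s = false`, the section of `f` at the letter `0 = false` is `f₀`, and the section of `f`
at the letter `1 = true` is `f₁`. -/
def WRec (s : Bool) (f f₀ f₁ : Equiv.Perm (List Bool)) : Prop :=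
  f [] = [] ∧ (∀ w : List Bool, f (false :: w) = s :: f₀ w) ∧
    (∀ w : List Bool, f (true :: w) = (!s) :: f₁ w)

namespace BTF

abbrev L := List Bool

/-- The section of `f` at vertex `v`. -/
def sec (f : L → L) (v : L) : L → L := fun w => (f (v ++ w)).drop v.length

/-- Tree automorphism (as a plain function): length preserving, prefix compatible, bijective. -/
structure TAF (f : L → L) : Prop where
  len : ∀ w, (f w).length = w.length
  pre : ∀ v w, (f (v ++ w)).take v.length = f v
  bij : Function.Bijective f

lemma sec_nil (f : L → L) : sec f [] = f := rfl

lemma TAF.nil {f : L → L} (hf : TAF f) : f [] = [] :=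
  List.length_eq_zero_iff.mp (hf.len [])

lemma TAF.split {f : L → L} (hf : TAF f) (v w : L) : f (v ++ w) = f v ++ sec f v w := by
  conv_lhs => rw [← List.take_append_drop v.length (f (v ++ w))]
  rw [hf.pre]
  rfl

lemma sec_length {f : L → L} (hf : TAF f) (v w : L) : (sec f v w).length = w.length := by
  simp [sec, hf.len]

lemma sec_injective {f : L → L} (hf : TAF f) (v : L) : Function.Injective (sec f v) := by
  intro w₁ w₂ h
  have h2 : f (v ++ w₁) = f (v ++ w₂) := by rw [hf.split, hf.split, h]
  have h3 := hf.bij.injective h2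
  exact List.append_cancel_left h3

lemma sec_sec (f : L → L) (u v : L) : sec (sec f u) v = sec f (u ++ v) := by
  funext w
  simp [sec, List.append_assoc, List.drop_drop, Nat.add_comm]

lemma sec_id (v : L) : sec (id : L → L) v = id := by
  funext w
  simp [sec]

lemma take_drop' (l : L) (m n : ℕ) : (l.drop m).take n = (l.take (m + n)).drop m := by
  rw [List.drop_take]
  congr 1
  omega

lemma TAF.sub {f : L → L} (hf : TAF f) (v : L) : TAF (sec f v) := by
  refine ⟨fun w => sec_length hf v w, ?_, ?_, ?_⟩
  · intro u w
    show ((f (v ++ (u ++ w))).drop v.length).take u.length = (f (v ++ u)).drop v.length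
    rw [← List.append_assoc]
    have h1 : (f (v ++ u ++ w)).take (v ++ u).length = f (v ++ u) := hf.pre _ _
    rw [take_drop']
    rw [show v.length + u.length = (v ++ u).length by simp]
    rw [h1]
  · exact sec_injective hf v
  · intro u
    obtain ⟨z, hz⟩ := hf.bij.surjective (f v ++ u)
    have hzl : z.length = v.length + u.length := by
      have h := hf.len z
      rw [hz] at h
      simp [hf.len] at h
      omega
    have h2 := hf.pre (z.take v.length) (z.drop v.length)
    rw [List.take_append_drop] at h2
    have h3 : (z.take v.length).length = v.length := by
      rw [List.length_take]; omega
    rw [h3, hz] at h2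
    rw [List.take_left' (hf.len v)] at h2
    have h4 : z.take v.length = v := hf.bij.injective h2.symm
    refine ⟨z.drop v.length, ?_⟩
    show (f (v ++ z.drop v.length)).drop v.length = u
    have h5 : v ++ z.drop v.length = z := by
      nth_rewrite 1 [← h4]
      exact List.take_append_drop _ _
    rw [h5, hz]
    exact List.drop_left' (hf.len v)

lemma TAF.comp {f g : L → L} (hf : TAF f) (hg : TAF g) : TAF (f ∘ g) := by
  refine ⟨fun w => by simp [Function.comp, hf.len, hg.len], ?_, hf.bij.comp hg.bij⟩
  intro v w
  show (f (g (v ++ w))).take v.length = f (g v)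
  rw [hg.split v w]
  have h := hf.pre (g v) (sec g v w)
  rwa [hg.len] at h

lemma sec_comp {f g : L → L} (hf : TAF f) (hg : TAF g) (v : L) :
    sec (f ∘ g) v = sec f (g v) ∘ sec g v := by
  funext w
  show (f (g (v ++ w))).drop v.length = (f (g v ++ sec g v w)).drop (g v).length
  rw [hg.split v w, hg.len]

lemma length_one_cases (w : L) (h : w.length = 1) : w = [false] ∨ w = [true] := by
  obtain ⟨x, rfl⟩ := List.length_eq_one_iff.mp h
  cases x <;> simp

lemma sec_single {f : L → L} (hf : TAF f) (v : L) :
    (sec f v [false] = [false] ∧ sec f v [true] = [true]) ∨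
    (sec f v [false] = [true] ∧ sec f v [true] = [false]) := by
  have h0 := length_one_cases _ (by simpa using sec_length hf v [false])
  have h1 := length_one_cases _ (by simpa using sec_length hf v [true])
  rcases h0 with h0 | h0 <;> rcases h1 with h1 | h1
  · exact absurd (sec_injective hf v (h0.trans h1.symm)) (by simp)
  · exact Or.inl ⟨h0, h1⟩
  · exact Or.inr ⟨h0, h1⟩
  · exact absurd (sec_injective hf v (h0.trans h1.symm)) (by simp)

/-- root activity of the section at `v`, as an element of `ZMod 2`. -/
def act (f : L → L) (v : L) : ZMod 2 := if sec f v [false] = [true] then 1 else 0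

lemma act_comp {f g : L → L} (hf : TAF f) (hg : TAF g) (v : L) :
    act (f ∘ g) v = act f (g v) + act g v := by
  have hs : sec (f ∘ g) v [false] = sec f (g v) (sec g v [false]) := by
    rw [sec_comp hf hg]; rfl
  rcases sec_single hg v with ⟨h1, h2⟩ | ⟨h1, h2⟩ <;>
    rcases sec_single hf (g v) with ⟨h3, h4⟩ | ⟨h3, h4⟩ <;>
      simp [act, hs, h1, h2, h3, h4] <;> decide

lemma act_id (v : L) : act (id : L → L) v = 0 := by
  simp [act, sec_id]

/-- parity of the number of active sections at level `n`. -/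
def pi : ℕ → (L → L) → ZMod 2
  | 0, f => act f []
  | n + 1, f => pi n (sec f [false]) + pi n (sec f [true])

lemma pi_comp (n : ℕ) {f g : L → L} (hf : TAF f) (hg : TAF g) :
    pi n (f ∘ g) = pi n f + pi n g := by
  induction n generalizing f g with
  | zero =>
    show act (f ∘ g) [] = act f [] + act g []
    rw [act_comp hf hg, hg.nil]
  | succ n ih =>
    simp only [pi]
    have e : ∀ x : Bool, sec (f ∘ g) [x] = sec f (g [x]) ∘ sec g [x] := fun x => sec_comp hf hg [x]
    rw [e false, e true]
    rcases sec_single hg [] with ⟨h1, h2⟩ | ⟨h1, h2⟩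
    · have h1' : g [false] = [false] := h1
      have h2' : g [true] = [true] := h2
      rw [h1', h2', ih (hf.sub _) (hg.sub _), ih (hf.sub _) (hg.sub _)]
      ring
    · have h1' : g [false] = [true] := h1
      have h2' : g [true] = [false] := h2
      rw [h1', h2', ih (hf.sub _) (hg.sub _), ih (hf.sub _) (hg.sub _)]
      ring

lemma pi_id (n : ℕ) : pi n (id : L → L) = 0 := by
  induction n with
  | zero => exact act_id []
  | succ n ih => simp [pi, sec_id, ih]

def chi (f : L → L) : ZMod 2 := pi 0 f + pi 1 f + pi 2 f

lemma chi_comp {f g : L → L} (hf : TAF f) (hg : TAF g) : chi (f ∘ g) = chi f + chi g := by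
  simp only [chi, pi_comp 0 hf hg, pi_comp 1 hf hg, pi_comp 2 hf hg]
  ring

lemma chi_id : chi (id : L → L) = 0 := by
  simp [chi, pi_id]

/-- `f` is a tree automorphism all of whose sections have trivial `chi`. -/
def Good (f : L → L) : Prop := TAF f ∧ ∀ v, chi (sec f v) = 0

lemma Good.comp {f g : L → L} (hf : Good f) (hg : Good g) : Good (f ∘ g) := by
  refine ⟨hf.1.comp hg.1, fun v => ?_⟩
  rw [sec_comp hf.1 hg.1, chi_comp (hf.1.sub _) (hg.1.sub _), hf.2, hg.2, add_zero]

lemma good_id : Good (id : L → L) := by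
  refine ⟨⟨fun w => rfl, fun v w => List.take_left (l₁ := v) (l₂ := w), Function.bijective_id⟩, fun v => ?_⟩
  rw [sec_id]; exact chi_id

lemma Good.inv {f g : L → L} (hf : Good f) (hfg : ∀ z, f (g z) = z) (hgf : ∀ z, g (f z) = z) :
    Good g := by
  have hgb : Function.Bijective g := Function.bijective_iff_has_inverse.mpr ⟨f, hfg, hgf⟩
  have hlen : ∀ w, (g w).length = w.length := by
    intro w
    have h := hf.1.len (g w)
    rw [hfg w] at h
    exact h.symm
  have hpre : ∀ v w : L, (g (v ++ w)).take v.length = g v := by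
    intro v w
    have h2 := hf.1.pre ((g (v ++ w)).take v.length) ((g (v ++ w)).drop v.length)
    rw [List.take_append_drop] at h2
    have h3 : ((g (v ++ w)).take v.length).length = v.length := by
      rw [List.length_take, hlen, List.length_append]; omega
    rw [h3, hfg] at h2
    rw [List.take_left] at h2
    have h4 := congrArg g h2
    rw [hgf] at h4
    exact h4.symm
  have htaf : TAF g := ⟨hlen, hpre, hgb⟩
  refine ⟨htaf, fun v => ?_⟩
  have hcomp : f ∘ g = id := funext hfg
  have h0 : chi (sec (f ∘ g) v) = 0 := by rw [hcomp, sec_id]; exact chi_id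
  rw [sec_comp hf.1 htaf, chi_comp (hf.1.sub _) (htaf.sub _), hf.2] at h0
  simpa using h0

section Generators

variable {a b c : Equiv.Perm (List Bool)}

lemma abc_len (ha : WRec true a b a) (hb : WRec true b c b) (hc : WRec false c c a) :
    ∀ w : L, (a w).length = w.length ∧ (b w).length = w.length ∧ (c w).length = w.length := by
  intro w
  induction w with
  | nil => simp [ha.1, hb.1, hc.1]
  | cons x w ih =>
    cases x <;>
      simp [ha.2.1, ha.2.2, hb.2.1, hb.2.2, hc.2.1, hc.2.2, ih.1, ih.2.1, ih.2.2]

lemma abc_pre (ha : WRec true a b a) (hb : WRec true b c b) (hc : WRec false c c a) :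
    ∀ v w : L, ((a (v ++ w)).take v.length = a v) ∧ ((b (v ++ w)).take v.length = b v) ∧
      ((c (v ++ w)).take v.length = c v) := by
  intro v
  induction v with
  | nil => intro w; simp [ha.1, hb.1, hc.1]
  | cons x v ih =>
    intro w
    cases x <;>
      simp [List.cons_append, ha.2.1, ha.2.2, hb.2.1, hb.2.2, hc.2.1, hc.2.2,
        List.take_succ_cons, (ih w).1, (ih w).2.1, (ih w).2.2]

lemma taf_a (ha : WRec true a b a) (hb : WRec true b c b) (hc : WRec false c c a) : TAF ⇑a :=
  ⟨fun w => (abc_len ha hb hc w).1, fun v w => (abc_pre ha hb hc v w).1, a.bijective⟩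

lemma taf_b (ha : WRec true a b a) (hb : WRec true b c b) (hc : WRec false c c a) : TAF ⇑b :=
  ⟨fun w => (abc_len ha hb hc w).2.1, fun v w => (abc_pre ha hb hc v w).2.1, b.bijective⟩

lemma taf_c (ha : WRec true a b a) (hb : WRec true b c b) (hc : WRec false c c a) : TAF ⇑c :=
  ⟨fun w => (abc_len ha hb hc w).2.2, fun v w => (abc_pre ha hb hc v w).2.2, c.bijective⟩

lemma sec_a_false (ha : WRec true a b a) : sec ⇑a [false] = ⇑b := by
  funext w
  show (a ([false] ++ w)).drop 1 = b w
  simp [List.singleton_append, ha.2.1]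

lemma sec_a_true (ha : WRec true a b a) : sec ⇑a [true] = ⇑a := by
  funext w
  show (a ([true] ++ w)).drop 1 = a w
  simp [List.singleton_append, ha.2.2]

lemma sec_b_false (hb : WRec true b c b) : sec ⇑b [false] = ⇑c := by
  funext w
  show (b ([false] ++ w)).drop 1 = c w
  simp [List.singleton_append, hb.2.1]

lemma sec_b_true (hb : WRec true b c b) : sec ⇑b [true] = ⇑b := by
  funext w
  show (b ([true] ++ w)).drop 1 = b w
  simp [List.singleton_append, hb.2.2]

lemma sec_c_false (hc : WRec false c c a) : sec ⇑c [false] = ⇑c := by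
  funext w
  show (c ([false] ++ w)).drop 1 = c w
  simp [List.singleton_append, hc.2.1]

lemma sec_c_true (hc : WRec false c c a) : sec ⇑c [true] = ⇑a := by
  funext w
  show (c ([true] ++ w)).drop 1 = a w
  simp [List.singleton_append, hc.2.2]

lemma sec_abc (ha : WRec true a b a) (hb : WRec true b c b) (hc : WRec false c c a) :
    ∀ v : L, (sec ⇑a v = ⇑a ∨ sec ⇑a v = ⇑b ∨ sec ⇑a v = ⇑c) ∧
      (sec ⇑b v = ⇑a ∨ sec ⇑b v = ⇑b ∨ sec ⇑b v = ⇑c) ∧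
      (sec ⇑c v = ⇑a ∨ sec ⇑c v = ⇑b ∨ sec ⇑c v = ⇑c) := by
  intro v
  induction v with
  | nil => exact ⟨Or.inl rfl, Or.inr (Or.inl rfl), Or.inr (Or.inr rfl)⟩
  | cons x v ih =>
    have hx : ∀ f : L → L, sec f (x :: v) = sec (sec f [x]) v := fun f => (sec_sec f [x] v).symm
    cases x
    · refine ⟨?_, ?_, ?_⟩
      · rw [hx, sec_a_false ha]; exact ih.2.1
      · rw [hx, sec_b_false hb]; exact ih.2.2
      · rw [hx, sec_c_false hc]; exact ih.2.2
    · refine ⟨?_, ?_, ?_⟩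
      · rw [hx, sec_a_true ha]; exact ih.1
      · rw [hx, sec_b_true hb]; exact ih.2.1
      · rw [hx, sec_c_true hc]; exact ih.1

lemma chi_a (ha : WRec true a b a) (hb : WRec true b c b) (hc : WRec false c c a) :
    chi ⇑a = 0 := by
  simp [chi, pi, act, sec, ha.1, ha.2.1, ha.2.2, hb.1, hb.2.1, hb.2.2, hc.1, hc.2.1, hc.2.2]
  decide

lemma chi_b (ha : WRec true a b a) (hb : WRec true b c b) (hc : WRec false c c a) :
    chi ⇑b = 0 := by
  simp [chi, pi, act, sec, ha.1, ha.2.1, ha.2.2, hb.1, hb.2.1, hb.2.2, hc.1, hc.2.1, hc.2.2]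
  decide

lemma chi_c (ha : WRec true a b a) (hb : WRec true b c b) (hc : WRec false c c a) :
    chi ⇑c = 0 := by
  simp [chi, pi, act, sec, ha.1, ha.2.1, ha.2.2, hb.1, hb.2.1, hb.2.2, hc.1, hc.2.1, hc.2.2]
  decide

lemma good_a (ha : WRec true a b a) (hb : WRec true b c b) (hc : WRec false c c a) :
    Good ⇑a := by
  refine ⟨taf_a ha hb hc, fun v => ?_⟩
  rcases (sec_abc ha hb hc v).1 with h | h | h <;> rw [h]
  exacts [chi_a ha hb hc, chi_b ha hb hc, chi_c ha hb hc]

lemma good_b (ha : WRec true a b a) (hb : WRec true b c b) (hc : WRec false c c a) :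
    Good ⇑b := by
  refine ⟨taf_b ha hb hc, fun v => ?_⟩
  rcases (sec_abc ha hb hc v).2.1 with h | h | h <;> rw [h]
  exacts [chi_a ha hb hc, chi_b ha hb hc, chi_c ha hb hc]

lemma good_c (ha : WRec true a b a) (hb : WRec true b c b) (hc : WRec false c c a) :
    Good ⇑c := by
  refine ⟨taf_c ha hb hc, fun v => ?_⟩
  rcases (sec_abc ha hb hc v).2.2 with h | h | h <;> rw [h]
  exacts [chi_a ha hb hc, chi_b ha hb hc, chi_c ha hb hc]

end Generators
lemma exists_min_moved (f : Equiv.Perm L) (hne : f ≠ 1) :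
    ∃ v : L, f v ≠ v ∧ ∀ w : L, w.length < v.length → f w = w := by
  classical
  have hex : ∃ n : ℕ, ∃ w : L, w.length = n ∧ f w ≠ w := by
    by_contra hcon
    push_neg at hcon
    exact hne (Equiv.ext fun w => (hcon w.length w rfl).trans (Equiv.Perm.one_apply w).symm)
  obtain ⟨v, hv1, hv2⟩ := Nat.find_spec hex
  refine ⟨v, hv2, fun w hw => ?_⟩
  by_contra hcw
  exact Nat.find_min hex (hv1 ▸ hw) ⟨w, rfl, hcw⟩

lemma moved_struct (f : Equiv.Perm L) (hf : TAF ⇑f) (hne : f ≠ 1) :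
    ∃ u : L, f u = u ∧ f (u ++ [false]) = u ++ [true] ∧ f (u ++ [true]) = u ++ [false] := by
  obtain ⟨v, hv, hmin⟩ := exists_min_moved f hne
  have hvne : v ≠ [] := by
    rintro rfl
    exact hv hf.nil
  have hlp : 0 < v.length := List.length_pos_iff.mpr hvne
  have hfixu : f v.dropLast = v.dropLast := hmin _ (by rw [List.length_dropLast]; omega)
  have hsplit : ∀ w : L, f (v.dropLast ++ w) = v.dropLast ++ sec (⇑f) v.dropLast w := by
    intro w
    rw [hf.split, hfixu]
  rcases sec_single hf v.dropLast with ⟨e1, e2⟩ | ⟨e1, e2⟩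
  · exfalso
    apply hv
    conv_lhs => rw [← List.dropLast_append_getLast hvne]
    conv_rhs => rw [← List.dropLast_append_getLast hvne]
    cases hgl : v.getLast hvne <;> rw [hsplit] <;> simp [e1, e2]
  · exact ⟨v.dropLast, hfixu, by rw [hsplit, e1], by rw [hsplit, e2]⟩

lemma no_odd (f : Equiv.Perm L) (hf : TAF ⇑f) (k : ℕ) (hpow : f ^ (2 * k + 1) = 1) :
    f = 1 := by
  by_contra hne
  obtain ⟨u, hu, h1, h2⟩ := moved_struct f hf hne
  have hsq : (f ^ 2) (u ++ [false]) = u ++ [false] := by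
    have e : (f ^ 2) (u ++ [false]) = f (f (u ++ [false])) := by
      rw [pow_two, Equiv.Perm.mul_apply]
    rw [e, h1, h2]
  have hiter : ∀ j : ℕ, ((f ^ 2) ^ j) (u ++ [false]) = u ++ [false] := by
    intro j
    induction j with
    | zero => simp
    | succ j ih => rw [pow_succ, Equiv.Perm.mul_apply, hsq, ih]
  have hfv : f (u ++ [false]) = u ++ [false] := by
    have hf1 : f = (f ^ 2) ^ (k + 1) := by
      rw [← pow_mul, show 2 * (k + 1) = (2 * k + 1) + 1 by ring, pow_succ, hpow, one_mul]
    conv_lhs => rw [hf1]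
    exact hiter (k + 1)
  rw [h1] at hfv
  simp at hfv

end BTF


open BTF

/-- Let `a, b, c` be the tree automorphisms defined by the wreath
recursion `a = σ(b,a)`, `b = σ(c,b)`, `c = (c,a)`.  Then `G = ⟨a,b,c⟩` is torsion free:
every nontrivial element of `G` has infinite order. -/
theorem boltenkov_group_torsion_free (a b c : Equiv.Perm (List Bool))
    (ha : WRec true a b a) (hb : WRec true b c b) (hc : WRec false c c a) :
    ∀ g ∈ Subgroup.closure {a, b, c}, g ≠ 1 → ¬ IsOfFinOrder g := by
  intro g hg hne hfin
  have hGood : ∀ x ∈ Subgroup.closure ({a, b, c} : Set (Equiv.Perm L)), Good ⇑x := by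
    intro x hx
    induction hx using Subgroup.closure_induction with
    | mem y hy =>
      simp only [Set.mem_insert_iff, Set.mem_singleton_iff] at hy
      rcases hy with rfl | rfl | rfl
      exacts [good_a ha hb hc, good_b ha hb hc, good_c ha hb hc]
    | one => exact Equiv.Perm.coe_one ▸ good_id
    | mul x y hxm hym hx hy => exact Equiv.Perm.coe_mul x y ▸ hx.comp hy
    | inv x hxm hx => exact hx.inv (fun z => x.apply_symm_apply z) (fun z => x.symm_apply_apply z)
  -- the order is a power of two
  set n := orderOf g with hn
  have hn0 : n ≠ 0 := hfin.orderOf_pos.ne'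
  have hn1 : n ≠ 1 := fun h => hne (orderOf_eq_one_iff.mp h)
  set v := n.factorization 2 with hvdef
  have hvdvd : 2 ^ v ∣ n := Nat.ordProj_dvd n 2
  have hodd2 : ¬ 2 ∣ n / 2 ^ (v) := Nat.not_dvd_ordCompl Nat.prime_two hn0
  obtain ⟨k, hk⟩ : Odd (n / 2 ^ (v)) := Nat.odd_iff.mpr (by omega)
  have h1mem : g ^ 2 ^ (v) ∈ Subgroup.closure ({a, b, c} : Set (Equiv.Perm L)) :=
    pow_mem hg _
  have h1pow : (g ^ 2 ^ (v)) ^ (2 * k + 1) = 1 := by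
    rw [← hk, ← pow_mul, Nat.ordProj_mul_ordCompl_eq_self n 2, hn, pow_orderOf_eq_one]
  have h1 : g ^ 2 ^ (v) = 1 := no_odd _ (hGood _ h1mem).1 k h1pow
  have hndvd : n ∣ 2 ^ (v) := hn ▸ orderOf_dvd_of_pow_eq_one h1
  have hneq : n = 2 ^ (v) := Nat.dvd_antisymm hndvd hvdvd
  have hvpos : v ≠ 0 := by
    intro h0
    rw [h0, pow_zero] at hneq
    exact hn1 hneq
  -- an element of order two
  set h := g ^ 2 ^ (v - 1) with hh
  have hmemh : h ∈ Subgroup.closure ({a, b, c} : Set (Equiv.Perm L)) := pow_mem hg _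
  have hh2 : h ^ 2 = 1 := by
    rw [hh, ← pow_mul]
    have e : 2 ^ (v - 1) * 2 = n := by
      rw [hneq, ← pow_succ]
      congr 1
      omega
    rw [e, hn, pow_orderOf_eq_one]
  have hhne : h ≠ 1 := by
    intro h1'
    rw [hh] at h1'
    have hd : n ∣ 2 ^ (v - 1) := hn ▸ orderOf_dvd_of_pow_eq_one h1'
    rw [hneq] at hd
    have hle := Nat.le_of_dvd (by positivity) hd
    have := (Nat.pow_le_pow_iff_right (by norm_num : 1 < 2)).mp hle
    omega
  -- analyze the section at a minimal moved vertex
  have hGoodh := hGood h hmemh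
  obtain ⟨u, hu, hm1, hm2⟩ := moved_struct h hGoodh.1 hhne
  set s := sec (⇑h) u with hsdef
  have hTAFs : TAF s := hGoodh.1.sub u
  have hchis : chi s = 0 := hGoodh.2 u
  have hss : s ∘ s = id := by
    have e1 : (⇑h ∘ ⇑h) = ⇑(1 : Equiv.Perm L) := by
      rw [← Equiv.Perm.coe_mul, ← pow_two, hh2]
    have e2 := sec_comp hGoodh.1 hGoodh.1 u
    rw [hu] at e2
    calc s ∘ s = sec (⇑h ∘ ⇑h) u := e2.symm
    _ = sec (⇑(1 : Equiv.Perm L)) u := by rw [e1]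
    _ = id := by rw [Equiv.Perm.coe_one, sec_id]
  have hsf : s [false] = [true] := by
    show (⇑h (u ++ [false])).drop u.length = [true]
    rw [hm1]
    exact List.drop_left (l₁ := u) (l₂ := [true])
  have hst : s [true] = [false] := by
    show (⇑h (u ++ [true])).drop u.length = [false]
    rw [hm2]
    exact List.drop_left (l₁ := u) (l₂ := [false])
  have hp0 : pi 0 s = 1 := by
    have e : BTF.sec s [] [false] = [true] := hsf
    show act s [] = 1
    rw [act, if_pos e]
  have hqp : BTF.sec s [true] ∘ BTF.sec s [false] = id := by
    have e2 := sec_comp hTAFs hTAFs [false]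
    rw [hsf] at e2
    rw [← e2, hss, sec_id]
  have hsum : ∀ m : ℕ, pi m (BTF.sec s [false]) + pi m (BTF.sec s [true]) = 0 := by
    intro m
    have e := pi_comp m (hTAFs.sub [true]) (hTAFs.sub [false])
    rw [hqp, pi_id] at e
    rw [add_comm]
    exact e.symm
  have hp1 : pi 1 s = 0 := hsum 0
  have hp2 : pi 2 s = 0 := hsum 1
  have hfinal : pi 0 s + pi 1 s + pi 2 s = 0 := hchis
  rw [hp0, hp1, hp2] at hfinal
  exact absurd hfinal (by decide)
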